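/- For every nonnegative integer N, the coefficient sequence of the Gaussian polynomial [N+3 choose 3]_q is unimodal: for all A with 0 ≤ A ≤ ⌊3N/2⌋ - 1, p(⌊3N/2⌋ - A, 3, N) ≥ p(⌊3N/2⌋ - A - 1, 3, N). -/

import Mathlib

/-- `pBdd n m N` is the number of partitions of `n` into at most `m` parts,
each part at most `N`; it is `0` for negative `n`. -/
noncomputable def pBdd (n : ℤ) (m N : ℕ) : ℕ :=
  if 0 ≤ n then
    Nat.card {π : Nat.Partition n.toNat //
      Multiset.card π.parts ≤ m ∧ ∀ i ∈ π.parts, i ≤ N}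
  else 0

/-- `pAtMost n m` is the number of partitions of `n` into at most `m` parts;
it is `0` for negative `n`. -/
noncomputable def pAtMost (n : ℤ) (m : ℕ) : ℕ :=
  if 0 ≤ n then
    Nat.card {π : Nat.Partition n.toNat // Multiset.card π.parts ≤ m}
  else 0

def toTriple (s : Multiset ℕ) : ℕ × ℕ × ℕ :=
  match s.sort (· ≤ ·) with
  | [] => (0, 0, 0)
  | [a] => (a, 0, 0)
  | [a, b] => (b, a, 0)
  | [a, b, c] => (c, b, a)
  | _ => (0, 0, 0)

lemma sort_coe (l : List ℕ) (h : l.Pairwise (· ≤ ·)) : Multiset.sort (↑l) (· ≤ ·) = l := by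
  have h1 : (↑(Multiset.sort (↑l : Multiset ℕ) (· ≤ ·)) : Multiset ℕ) = ↑l :=
    Multiset.sort_eq _ _
  exact (Multiset.coe_eq_coe.mp h1).eq_of_pairwise' (Multiset.pairwise_sort _ _) h

lemma toTriple_spec (s : Multiset ℕ) (h3 : Multiset.card s ≤ 3) (hpos : ∀ i ∈ s, 0 < i) :
    ((toTriple s).2.1 ≤ (toTriple s).1 ∧ (toTriple s).2.2 ≤ (toTriple s).2.1 ∧
      (toTriple s).1 + (toTriple s).2.1 + (toTriple s).2.2 = s.sum) ∧
    (∀ i ∈ ({(toTriple s).1, (toTriple s).2.1, (toTriple s).2.2} : Multiset ℕ),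
        i ∈ s ∨ i = 0) ∧
    s = Multiset.filter (· ≠ 0) {(toTriple s).1, (toTriple s).2.1, (toTriple s).2.2} := by
  have hs : ↑(s.sort (· ≤ ·)) = s := Multiset.sort_eq s _
  have hsor : (s.sort (· ≤ ·)).Pairwise (· ≤ ·) := Multiset.pairwise_sort s _
  have hlen : (s.sort (· ≤ ·)).length = Multiset.card s := Multiset.length_sort _
  match hl : s.sort (· ≤ ·) with
  | [] =>
    rw [hl] at hs
    subst hs
    simp [toTriple, hl, Multiset.filter_singleton]
  | [a] =>
    rw [hl] at hs
    have ha : 0 < a := hpos a (by rw [← hs]; simp)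
    subst hs
    simp [toTriple, hl, Multiset.filter_singleton, ha.ne']
  | [a, b] =>
    rw [hl] at hs hsor
    have ha : 0 < a := hpos a (by rw [← hs]; simp)
    have hb : 0 < b := hpos b (by rw [← hs]; simp)
    have hab : a ≤ b := by simpa [List.pairwise_cons] using hsor
    subst hs
    simp only [toTriple, hl]
    refine ⟨⟨hab, by omega, by simp; ring⟩, ?_, ?_⟩
    · intro i hi
      simp at hi
      rcases hi with h | h | h <;> simp [h]
    · have hf : Multiset.filter (· ≠ 0) ({b, a, 0} : Multiset ℕ) = {b, a} := by
        rw [show ({b, a, 0} : Multiset ℕ) = b ::ₘ a ::ₘ 0 ::ₘ 0 from rfl]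
        rw [Multiset.filter_cons_of_pos _ (by simp [hb.ne']),
          Multiset.filter_cons_of_pos _ (by simp [ha.ne']),
          Multiset.filter_cons_of_neg _ (by simp), Multiset.filter_zero]
        rfl
      rw [hf]
      show (a ::ₘ b ::ₘ 0 : Multiset ℕ) = b ::ₘ a ::ₘ 0
      rw [Multiset.cons_swap]
  | [a, b, c] =>
    rw [hl] at hs hsor
    have ha : 0 < a := hpos a (by rw [← hs]; simp)
    have hb : 0 < b := hpos b (by rw [← hs]; simp)
    have hc : 0 < c := hpos c (by rw [← hs]; simp)
    obtain ⟨⟨hab, hac⟩, hbc⟩ : (a ≤ b ∧ a ≤ c) ∧ b ≤ c := by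
      simpa [List.pairwise_cons] using hsor
    subst hs
    simp only [toTriple, hl]
    refine ⟨⟨hbc, hab, by simp; ring⟩, ?_, ?_⟩
    · intro i hi
      simp at hi
      rcases hi with h | h | h <;> simp [h]
    · have hf : Multiset.filter (· ≠ 0) ({c, b, a} : Multiset ℕ) = {c, b, a} :=
        Multiset.filter_eq_self.2 (by
          intro i hi; simp at hi; rcases hi with h | h | h <;> omega)
      rw [hf]
      show (a ::ₘ b ::ₘ c ::ₘ 0 : Multiset ℕ) = c ::ₘ b ::ₘ a ::ₘ 0
      rw [Multiset.cons_swap a b, Multiset.cons_swap a c, Multiset.cons_swap b c]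
  | a :: b :: c :: d :: l' =>
    rw [hl] at hlen
    simp at hlen
    omega

lemma toTriple_filter (x y z : ℕ) (hxy : y ≤ x) (hyz : z ≤ y) :
    toTriple (Multiset.filter (· ≠ 0) {x, y, z}) = (x, y, z) := by
  have hxyz : ({x, y, z} : Multiset ℕ) = x ::ₘ y ::ₘ z ::ₘ 0 := rfl
  rcases Nat.eq_zero_or_pos z with hz | hz
  · rcases Nat.eq_zero_or_pos y with hy | hy
    · rcases Nat.eq_zero_or_pos x with hx | hx
      · subst hz hy hx
        have : Multiset.filter (· ≠ 0) ({0, 0, 0} : Multiset ℕ) = 0 := by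
          rw [hxyz]; simp [Multiset.filter_singleton]
        rw [this]
        simp [toTriple, Multiset.sort_zero]
      · subst hz hy
        have : Multiset.filter (· ≠ 0) ({x, 0, 0} : Multiset ℕ) = ↑[x] := by
          rw [hxyz, Multiset.filter_cons_of_pos _ (by simp [hx.ne']),
            Multiset.filter_cons_of_neg _ (by simp),
            Multiset.filter_cons_of_neg _ (by simp), Multiset.filter_zero]
          rfl
        rw [this, toTriple, sort_coe [x] (by simp)]
    · subst hz
      have hx : 0 < x := lt_of_lt_of_le hy hxy
      have : Multiset.filter (· ≠ 0) ({x, y, 0} : Multiset ℕ) = ↑[y, x] := by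
        rw [hxyz, Multiset.filter_cons_of_pos _ (by simp [hx.ne']),
          Multiset.filter_cons_of_pos _ (by simp [hy.ne']),
          Multiset.filter_cons_of_neg _ (by simp), Multiset.filter_zero]
        show (x ::ₘ y ::ₘ 0 : Multiset ℕ) = y ::ₘ x ::ₘ 0
        rw [Multiset.cons_swap]
      rw [this, toTriple, sort_coe [y, x] (by simp [List.pairwise_cons]; omega)]
  · have hy : 0 < y := lt_of_lt_of_le hz hyz
    have hx : 0 < x := lt_of_lt_of_le hy hxy
    have : Multiset.filter (· ≠ 0) ({x, y, z} : Multiset ℕ) = ↑[z, y, x] := by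
      rw [hxyz, Multiset.filter_cons_of_pos _ (by simp [hx.ne']),
        Multiset.filter_cons_of_pos _ (by simp [hy.ne']),
        Multiset.filter_cons_of_pos _ (by simp [hz.ne']), Multiset.filter_zero]
      show (x ::ₘ y ::ₘ z ::ₘ 0 : Multiset ℕ) = z ::ₘ y ::ₘ x ::ₘ 0
      rw [Multiset.cons_swap x y, Multiset.cons_swap x z, Multiset.cons_swap y z]
    rw [this, toTriple, sort_coe [z, y, x] (by simp [List.pairwise_cons]; omega)]

def Sfin (N n : ℕ) : Finset (ℕ × ℕ × ℕ) :=
  ((Finset.range (N+1)) ×ˢ (Finset.range (N+1)) ×ˢ (Finset.range (N+1))).filter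
    (fun t => t.2.1 ≤ t.1 ∧ t.2.2 ≤ t.2.1 ∧ t.1 + t.2.1 + t.2.2 = n)

lemma mem_Sfin {N n : ℕ} {t : ℕ × ℕ × ℕ} :
    t ∈ Sfin N n ↔ t.1 ≤ N ∧ t.2.1 ≤ t.1 ∧ t.2.2 ≤ t.2.1 ∧ t.1 + t.2.1 + t.2.2 = n := by
  simp only [Sfin, Finset.mem_filter, Finset.mem_product, Finset.mem_range]
  omega

lemma pBdd_eq (N k : ℕ) : pBdd (k : ℤ) 3 N = (Sfin N k).card := by
  rw [pBdd, if_pos (Int.natCast_nonneg k)]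
  rw [← Nat.card_eq_finsetCard]
  have htn : ((k : ℤ)).toNat = k := Int.toNat_natCast k
  apply le_antisymm
  · -- partitions → triples
    apply Nat.card_le_card_of_injective
      (f := fun π => (⟨toTriple π.1.parts, by
        obtain ⟨⟨o1, o2, osum⟩, hmem, -⟩ :=
          toTriple_spec π.1.parts π.2.1 (fun i hi => π.1.parts_pos hi)
        rw [mem_Sfin]
        refine ⟨?_, o1, o2, by rw [osum, π.1.parts_sum, htn]⟩
        rcases hmem (toTriple π.1.parts).1 (by simp) with h | h
        · exact π.2.2 _ h
        · omega⟩ : {t // t ∈ Sfin N k}))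
    rintro ⟨π, h3, hN⟩ ⟨π', h3', hN'⟩ h
    simp only [Subtype.mk.injEq] at h ⊢
    obtain ⟨-, -, hrec⟩ := toTriple_spec π.parts h3 (fun i hi => π.parts_pos hi)
    obtain ⟨-, -, hrec'⟩ := toTriple_spec π'.parts h3' (fun i hi => π'.parts_pos hi)
    ext : 1
    rw [hrec, hrec', h]
  · -- triples → partitions
    apply Nat.card_le_card_of_injective
      (f := fun t => (⟨Nat.Partition.ofSums ((k:ℤ)).toNat {t.1.1, t.1.2.1, t.1.2.2} (by
          have := (mem_Sfin.1 t.2).2.2.2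
          rw [htn]
          simp
          omega), by
        constructor
        · rw [Nat.Partition.ofSums_parts]
          refine le_trans (Multiset.card_le_card (Multiset.filter_le _ _)) ?_
          rfl
        · intro i hi
          rw [Nat.Partition.ofSums_parts] at hi
          have hi' := Multiset.mem_of_mem_filter hi
          have ht := mem_Sfin.1 t.2
          simp at hi'
          rcases hi' with h | h | h <;> omega⟩ :
          {π : Nat.Partition ((k:ℤ)).toNat //
            Multiset.card π.parts ≤ 3 ∧ ∀ i ∈ π.parts, i ≤ N}))
    rintro ⟨⟨x, y, z⟩, ht⟩ ⟨⟨x', y', z'⟩, ht'⟩ h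
    simp only [Subtype.mk.injEq, Nat.Partition.ext_iff, Nat.Partition.ofSums_parts] at h
    have ht1 := mem_Sfin.1 ht
    have ht2 := mem_Sfin.1 ht'
    simp only [Subtype.mk.injEq]
    have := congrArg toTriple h
    rw [toTriple_filter x y z ht1.2.1 ht1.2.2.1,
      toTriple_filter x' y' z' ht2.2.1 ht2.2.2.1] at this
    simpa using this

lemma Sfin_step (N n : ℕ) (h : 2 * (n + 1) ≤ 3 * N) :
    (Sfin N n).card ≤ (Sfin N (n + 1)).card := by
  classical
  have h1 := Finset.card_filter_add_card_filter_not
    (s := Sfin N (n+1)) (p := fun t => t.1 = t.2.1)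
  have h2 := Finset.card_filter_add_card_filter_not
    (s := Sfin N n) (p := fun t => t.1 = N)
  have e : ((Sfin N (n+1)).filter (fun t => ¬ t.1 = t.2.1)).card
      = ((Sfin N n).filter (fun t => ¬ t.1 = N)).card := by
    apply Finset.card_nbij' (i := fun t => (t.1 - 1, t.2.1, t.2.2))
      (j := fun t => (t.1 + 1, t.2.1, t.2.2))
    · intro t ht
      simp only [Finset.mem_coe, Finset.mem_filter, mem_Sfin] at ht ⊢
      omega
    · intro t ht
      simp only [Finset.mem_coe, Finset.mem_filter, mem_Sfin] at ht ⊢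
      omega
    · intro t ht
      simp only [Finset.mem_coe, Finset.mem_filter, mem_Sfin] at ht
      obtain ⟨x, y, z⟩ := t
      simp [Prod.ext_iff] at *
      try omega
    · intro t ht
      simp only [Finset.mem_coe, Finset.mem_filter, mem_Sfin] at ht
      obtain ⟨x, y, z⟩ := t
      simp [Prod.ext_iff] at *
      try omega
  have hAB : ((Sfin N n).filter (fun t => t.1 = N)).card
      ≤ ((Sfin N (n+1)).filter (fun t => t.1 = t.2.1)).card := by
    apply Finset.card_le_card_of_injOn
      (f := fun t => (t.2.1 + ((n+1)/2 + N - n), t.2.1 + ((n+1)/2 + N - n),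
        (n+1) - 2*(t.2.1 + ((n+1)/2 + N - n))))
    · intro t ht
      simp only [Finset.mem_coe, Finset.mem_filter, mem_Sfin] at ht
      simp [Finset.mem_filter, mem_Sfin]
      omega
    · intro a ha b hb hab
      obtain ⟨x, y, z⟩ := a
      obtain ⟨x', y', z'⟩ := b
      simp only [Finset.coe_filter, Set.mem_setOf_eq, mem_Sfin] at ha hb
      simp only [Prod.mk.injEq] at hab ha hb ⊢
      omega
  omega

/-- Unimodality of the coefficients of `[N+3 choose 3]_q`. -/
theorem stmt8 (N A : ℕ) (hA : A + 1 ≤ 3 * N / 2) :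
    pBdd (((3 * N / 2 : ℕ) : ℤ) - A - 1) 3 N ≤
      pBdd (((3 * N / 2 : ℕ) : ℤ) - A) 3 N := by
  have h1 : (((3 * N / 2 : ℕ) : ℤ) - A - 1) = ((3 * N / 2 - A - 1 : ℕ) : ℤ) := by omega
  have h2 : (((3 * N / 2 : ℕ) : ℤ) - A) = ((3 * N / 2 - A : ℕ) : ℤ) := by omega
  rw [h1, h2, pBdd_eq, pBdd_eq]
  have h3 : 3 * N / 2 - A - 1 + 1 = 3 * N / 2 - A := by omega
  have h4 : 2 * ((3 * N / 2 - A - 1) + 1) ≤ 3 * N := by omega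
  have := Sfin_step N (3 * N / 2 - A - 1) h4
  rwa [h3] at this
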